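/- Let α > 1, k > 1, and let B, D ≥ 0 be constants. Suppose (ξ_i)_{i≥-1} is a sequence of reals satisfying ξ_i ≤ B α^{-i} + D(1+i) α^{-i} + exp(α^{-i}/(k-1)) ξ_{i-1} for all i ≥ 0, with ξ_{-1} ≥ 0. Then for every i ≥ 0, ξ_i ≤ exp(1/((k-1)(α-1))) (B α/(α-1) + D α²/(α-1)²) + exp(α/((k-1)(α-1))) ξ_{-1}. -/
import Mathlib


theorem stmt_6 (α k B D : ℝ) (hα : 1 < α) (hk : 1 < k) (hB : 0 ≤ B) (hD : 0 ≤ D)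
    (ξ : ℤ → ℝ) (hneg : 0 ≤ ξ (-1))
    (hrec : ∀ i : ℤ, 0 ≤ i →
      ξ i ≤ B * α ^ (-i) + D * (1 + (i : ℝ)) * α ^ (-i)
        + Real.exp (α ^ (-i) / (k - 1)) * ξ (i - 1)) :
    ∀ i : ℤ, 0 ≤ i →
      ξ i ≤ Real.exp (1 / ((k - 1) * (α - 1))) * (B * α / (α - 1) + D * α ^ 2 / (α - 1) ^ 2)
        + Real.exp (α / ((k - 1) * (α - 1))) * ξ (-1) := by
  have hα0 : (0:ℝ) < α := lt_trans one_pos hα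
  set x : ℝ := α⁻¹ with hxdef
  have hx0 : 0 < x := inv_pos.mpr hα0
  have hx1 : x < 1 := inv_lt_one_of_one_lt₀ hα
  have hk1 : (0:ℝ) < k - 1 := by linarith
  have h1x : (0:ℝ) < 1 - x := by linarith
  have hpow : ∀ m : ℕ, α ^ (-(m:ℤ)) = x ^ m := by
    intro m
    rw [zpow_neg, zpow_natCast, hxdef, inv_pow]
  -- geometric sum bounds
  have hgeom : ∀ m : ℕ, (∑ j ∈ Finset.range m, x ^ j) ≤ 1 / (1 - x) := by
    intro m
    rw [one_div]
    calc (∑ j ∈ Finset.range m, x ^ j) ≤ ∑' j : ℕ, x ^ j :=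
          Summable.sum_le_tsum _ (fun j _ => by positivity)
            (summable_geometric_of_lt_one hx0.le hx1)
      _ = (1 - x)⁻¹ := tsum_geometric_of_lt_one hx0.le hx1
  have hsum2 : Summable (fun j : ℕ => (1 + (j:ℝ)) * x ^ j) := by
    have h1 := summable_geometric_of_lt_one hx0.le hx1
    have h2 : Summable (fun j : ℕ => (j:ℝ) * x ^ j) := by
      have := summable_pow_mul_geometric_of_norm_lt_one (R := ℝ) 1
        (by rwa [Real.norm_eq_abs, abs_of_pos hx0] : ‖x‖ < 1)
      simpa using this
    simpa [add_mul] using h1.add h2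
  have hgeom2 : ∀ m : ℕ, (∑ j ∈ Finset.range m, (1 + (j:ℝ)) * x ^ j) ≤ 1 / (1 - x) ^ 2 := by
    intro m
    have hxnorm : ‖x‖ < 1 := by rwa [Real.norm_eq_abs, abs_of_pos hx0]
    calc (∑ j ∈ Finset.range m, (1 + (j:ℝ)) * x ^ j) ≤ ∑' j : ℕ, (1 + (j:ℝ)) * x ^ j :=
          Summable.sum_le_tsum _ (fun j _ => by positivity) hsum2
      _ = (∑' j : ℕ, x ^ j) + ∑' j : ℕ, (j:ℝ) * x ^ j := by
          rw [← Summable.tsum_add (summable_geometric_of_lt_one hx0.le hx1)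
            (by simpa using summable_pow_mul_geometric_of_norm_lt_one (R := ℝ) 1 hxnorm)]
          congr 1; ext j; ring
      _ = (1 - x)⁻¹ + x / (1 - x) ^ 2 := by
          rw [tsum_geometric_of_lt_one hx0.le hx1, tsum_coe_mul_geometric_of_norm_lt_one hxnorm]
      _ = 1 / (1 - x) ^ 2 := by field_simp; ring
  -- main induction
  have key : ∀ n : ℕ,
      ξ (n : ℤ) ≤ Real.exp ((∑ l ∈ Finset.range n, x ^ (l + 1)) / (k - 1)) *
              (∑ j ∈ Finset.range (n + 1), (B + D * (1 + (j:ℝ))) * x ^ j)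
            + Real.exp ((∑ l ∈ Finset.range (n + 1), x ^ l) / (k - 1)) * ξ (-1) := by
    intro n
    induction n with
    | zero =>
        have h := hrec 0 le_rfl
        simpa using h
    | succ n ih =>
        have h := hrec ((n : ℤ) + 1) (by positivity)
        rw [show -((n:ℤ)+1) = -(((n+1 : ℕ)):ℤ) by push_cast; ring] at h
        rw [hpow (n+1)] at h
        rw [show ((n:ℤ)+1-1) = (n:ℤ) by ring] at h
        set c := x ^ (n + 1) / (k - 1) with hc
        set s := (∑ l ∈ Finset.range n, x ^ (l + 1)) / (k - 1) with hs
        set t := (∑ l ∈ Finset.range (n + 1), x ^ l) / (k - 1) with ht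
        set P := ∑ j ∈ Finset.range (n + 1), (B + D * (1 + (j:ℝ))) * x ^ j with hP
        have hPnn : 0 ≤ P := Finset.sum_nonneg fun j _ => by positivity
        have hcnn : 0 ≤ c := by positivity
        have hsnn : 0 ≤ s := by
          apply div_nonneg _ hk1.le
          exact Finset.sum_nonneg fun l _ => by positivity
        have hstep : Real.exp c * ξ (n : ℤ) ≤ Real.exp (c + s) * P + Real.exp (c + t) * ξ (-1) := by
          calc Real.exp c * ξ (n : ℤ) ≤ Real.exp c * (Real.exp s * P + Real.exp t * ξ (-1)) :=
                mul_le_mul_of_nonneg_left ih (Real.exp_pos c).le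
            _ = Real.exp (c + s) * P + Real.exp (c + t) * ξ (-1) := by
                rw [Real.exp_add, Real.exp_add]; ring
        have hs' : (∑ l ∈ Finset.range (n + 1), x ^ (l + 1)) / (k - 1) = c + s := by
          rw [Finset.sum_range_succ, add_div, hc, hs]; ring
        have ht' : (∑ l ∈ Finset.range (n + 2), x ^ l) / (k - 1) = c + t := by
          rw [Finset.sum_range_succ, add_div, hc, ht]; ring
        have hP' : (∑ j ∈ Finset.range (n + 2), (B + D * (1 + (j:ℝ))) * x ^ j)
            = P + (B + D * (1 + ((n:ℝ) + 1))) * x ^ (n + 1) := by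
          rw [Finset.sum_range_succ]; push_cast; ring
        rw [hs', ht', hP']
        have hone : (1:ℝ) ≤ Real.exp (c + s) := Real.one_le_exp (by linarith)
        have hterm : 0 ≤ (B + D * (1 + ((n:ℝ) + 1))) * x ^ (n + 1) := by positivity
        have hfinal : (B + D * (1 + ((n:ℝ) + 1))) * x ^ (n + 1)
            ≤ Real.exp (c + s) * ((B + D * (1 + ((n:ℝ) + 1))) * x ^ (n + 1)) :=
          le_mul_of_one_le_left hterm hone
        have hcast : ξ ((n:ℤ) + 1) = ξ (((n+1 : ℕ)):ℤ) := by norm_num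
        rw [hcast] at h
        push_cast at h ⊢
        nlinarith [h, hstep]
  -- conversion identities
  have e1x : 1 - x = (α - 1) / α := by
    rw [hxdef]; field_simp
  have einv : 1 / (1 - x) = α / (α - 1) := by rw [e1x, one_div_div]
  have einv2 : 1 / (1 - x) ^ 2 = α ^ 2 / (α - 1) ^ 2 := by
    rw [show (1:ℝ) / (1 - x) ^ 2 = (1 / (1 - x)) ^ 2 by rw [div_pow, one_pow], einv, div_pow]
  have exdiv : x * (1 / (1 - x)) = 1 / (α - 1) := by
    rw [einv, hxdef]
    field_simp
  -- conclude
  intro i hi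
  obtain ⟨n, rfl⟩ := Int.eq_ofNat_of_zero_le hi
  have hkey := key n
  have hSx : (∑ l ∈ Finset.range n, x ^ (l + 1)) / (k - 1) ≤ 1 / ((k - 1) * (α - 1)) := by
    have h1 : (∑ l ∈ Finset.range n, x ^ (l + 1)) ≤ 1 / (α - 1) := by
      have hm : (∑ l ∈ Finset.range n, x ^ (l + 1)) = x * ∑ l ∈ Finset.range n, x ^ l := by
        rw [Finset.mul_sum]; exact Finset.sum_congr rfl fun l _ => by ring
      rw [hm, ← exdiv]
      exact mul_le_mul_of_nonneg_left (hgeom n) hx0.le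
    rw [show (1:ℝ) / ((k - 1) * (α - 1)) = (1 / (α - 1)) / (k - 1) by
      rw [div_div, mul_comm]]
    exact (div_le_div_iff_of_pos_right hk1).mpr h1
  have hTx : (∑ l ∈ Finset.range (n + 1), x ^ l) / (k - 1) ≤ α / ((k - 1) * (α - 1)) := by
    have h1 : (∑ l ∈ Finset.range (n + 1), x ^ l) ≤ α / (α - 1) := (hgeom (n + 1)).trans_eq einv
    rw [show α / ((k - 1) * (α - 1)) = (α / (α - 1)) / (k - 1) by
      rw [div_div, mul_comm]]
    exact (div_le_div_iff_of_pos_right hk1).mpr h1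
  have hPx : (∑ j ∈ Finset.range (n + 1), (B + D * (1 + (j:ℝ))) * x ^ j)
      ≤ B * α / (α - 1) + D * α ^ 2 / (α - 1) ^ 2 := by
    have hsplit : (∑ j ∈ Finset.range (n + 1), (B + D * (1 + (j:ℝ))) * x ^ j)
        = B * (∑ j ∈ Finset.range (n + 1), x ^ j)
          + D * (∑ j ∈ Finset.range (n + 1), (1 + (j:ℝ)) * x ^ j) := by
      rw [Finset.mul_sum, Finset.mul_sum, ← Finset.sum_add_distrib]
      exact Finset.sum_congr rfl fun j _ => by ring
    have h1 : B * (∑ j ∈ Finset.range (n + 1), x ^ j) ≤ B * (α / (α - 1)) :=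
      mul_le_mul_of_nonneg_left ((hgeom (n + 1)).trans_eq einv) hB
    have h2 : D * (∑ j ∈ Finset.range (n + 1), (1 + (j:ℝ)) * x ^ j)
        ≤ D * (α ^ 2 / (α - 1) ^ 2) :=
      mul_le_mul_of_nonneg_left ((hgeom2 (n + 1)).trans_eq einv2) hD
    rw [hsplit, mul_div_assoc, mul_div_assoc]
    linarith
  have hPnn : 0 ≤ ∑ j ∈ Finset.range (n + 1), (B + D * (1 + (j:ℝ))) * x ^ j :=
    Finset.sum_nonneg fun j _ => by positivity
  have hA : Real.exp ((∑ l ∈ Finset.range n, x ^ (l + 1)) / (k - 1)) *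
        (∑ j ∈ Finset.range (n + 1), (B + D * (1 + (j:ℝ))) * x ^ j)
      ≤ Real.exp (1 / ((k - 1) * (α - 1))) * (B * α / (α - 1) + D * α ^ 2 / (α - 1) ^ 2) :=
    mul_le_mul (Real.exp_le_exp.mpr hSx) hPx hPnn (Real.exp_pos _).le
  have hBb : Real.exp ((∑ l ∈ Finset.range (n + 1), x ^ l) / (k - 1)) * ξ (-1)
      ≤ Real.exp (α / ((k - 1) * (α - 1))) * ξ (-1) :=
    mul_le_mul_of_nonneg_right (Real.exp_le_exp.mpr hTx) hneg
  linarith
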